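/- If a 2-group of order at least 8 has a unique subgroup of order 2, then it is cyclic or generalized quaternion. -/

import Mathlib

set_option linter.unusedSectionVars false

open Subgroup Finset

lemma UIQ.count_pow {K : Type*} [Group K] [Fintype K] [DecidableEq K]
    (hcomm : ∀ x y : K, x * y = y * x)
    (hu : ∀ x y : K, x ^ 2 = 1 → y ^ 2 = 1 → x ≠ 1 → y ≠ 1 → x = y) :
    ∀ e : ℕ, (univ.filter fun x : K => x ^ (2 ^ e) = 1).card ≤ 2 ^ e := by
  intro e
  induction e with
  | zero =>
    simpa using Finset.card_le_one.2 (by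
      intro x hx y hy
      simp only [mem_filter, pow_zero, pow_one] at hx hy
      rw [hx.2, hy.2])
  | succ e ih =>
    set s := univ.filter fun x : K => x ^ (2 ^ (e + 1)) = 1 with hs
    have himage : s.image (fun x => x ^ 2) ⊆ univ.filter fun x : K => x ^ (2 ^ e) = 1 := by
      intro y hy
      obtain ⟨x, hx, rfl⟩ := Finset.mem_image.1 hy
      simp only [mem_filter, mem_univ, true_and, hs] at hx ⊢
      rw [← pow_mul]
      rw [pow_succ, mul_comm] at hx
      exact hx
    have hfib : ∀ c ∈ s.image (fun x => x ^ 2), (s.filter fun x => x ^ 2 = c).card ≤ 2 := by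
      intro c _
      by_contra hlt
      push_neg at hlt
      obtain ⟨x, y, w, hx, hy, hw, hxy, hxw, hyw⟩ := Finset.two_lt_card_iff.1 hlt
      simp only [mem_filter] at hx hy hw
      have key : ∀ u v : K, u ^ 2 = c → v ^ 2 = c → (u * v⁻¹) ^ 2 = 1 := by
        intro u v hu' hv'
        have : (u * v⁻¹) ^ 2 = u ^ 2 * (v⁻¹) ^ 2 := by
          rw [pow_two, pow_two, pow_two]
          rw [mul_assoc, ← mul_assoc v⁻¹ u v⁻¹, hcomm v⁻¹ u, mul_assoc, mul_assoc]
        rw [this, inv_pow, hu', hv', mul_inv_cancel]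
      have h1 : (x * y⁻¹) ^ 2 = 1 := key x y hx.2 hy.2
      have h2 : (x * w⁻¹) ^ 2 = 1 := key x w hx.2 hw.2
      have hne1 : x * y⁻¹ ≠ 1 := by
        intro h; exact hxy (by rwa [mul_inv_eq_one] at h)
      have hne2 : x * w⁻¹ ≠ 1 := by
        intro h; exact hxw (by rwa [mul_inv_eq_one] at h)
      have := hu _ _ h1 h2 hne1 hne2
      have : y⁻¹ = w⁻¹ := by
        exact mul_left_cancel this
      exact hyw (by rw [← inv_inv y, this, inv_inv])
    calc s.card ≤ 2 * (s.image (fun x => x ^ 2)).card :=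
          Finset.card_le_mul_card_image s 2 hfib
      _ ≤ 2 * 2 ^ e := by
          exact Nat.mul_le_mul_left 2 (le_trans (Finset.card_le_card himage) ih)
      _ = 2 ^ (e + 1) := by ring

lemma UIQ.isCyclic_comm {K : Type*} [Group K] [Finite K]
    (hcomm : ∀ x y : K, x * y = y * x) (lam' : ℕ) (hcard : Nat.card K = 2 ^ lam')
    (hu : ∀ x y : K, x ^ 2 = 1 → y ^ 2 = 1 → x ≠ 1 → y ≠ 1 → x = y) :
    IsCyclic K := by
  classical
  letI := Fintype.ofFinite K
  apply isCyclic_of_card_pow_eq_one_le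
  intro n hn
  have hdvd : ∀ x : K, x ^ (2 ^ lam') = 1 := fun x => by
    rw [← hcard]
    rw [Nat.card_eq_fintype_card]
    exact pow_card_eq_one
  set d := Nat.gcd n (2 ^ lam') with hd
  obtain ⟨e, he, hde⟩ := (Nat.dvd_prime_pow Nat.prime_two).1 (Nat.gcd_dvd_right n (2 ^ lam'))
  have hsub : (univ.filter fun x : K => x ^ n = 1) ⊆ univ.filter fun x : K => x ^ (2 ^ e) = 1 := by
    intro x hx
    simp only [mem_filter, mem_univ, true_and] at hx ⊢
    rw [← hde]
    have h1 : orderOf x ∣ n := orderOf_dvd_of_pow_eq_one hx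
    have h2 : orderOf x ∣ 2 ^ lam' := orderOf_dvd_of_pow_eq_one (hdvd x)
    exact orderOf_dvd_iff_pow_eq_one.1 (Nat.dvd_gcd h1 h2)
  calc (univ.filter fun x : K => x ^ n = 1).card ≤ _ := Finset.card_le_card hsub
    _ ≤ 2 ^ e := UIQ.count_pow hcomm hu e
    _ = d := hde.symm
    _ ≤ n := Nat.le_of_dvd hn (Nat.gcd_dvd_left _ _)

section

variable {G : Type*} [Group G] [Finite G]

/-- key: anything commuting with a maximal-order element lies in its cyclic group -/
lemma UIQ.commute_mem {lam : ℕ} (hcard : Nat.card G = 2 ^ lam)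
    (hu : ∀ x y : G, x ^ 2 = 1 → y ^ 2 = 1 → x ≠ 1 → y ≠ 1 → x = y)
    {a : G} (hmax : ∀ x : G, orderOf x ≤ orderOf a)
    {b : G} (hcom : Commute a b) : b ∈ zpowers a := by
  set H := Subgroup.closure ({a, b} : Set G) with hH
  have haH : a ∈ H := Subgroup.subset_closure (by simp)
  have hbH : b ∈ H := Subgroup.subset_closure (by simp)
  -- H is commutative
  have hcent : H ≤ Subgroup.centralizer ({a, b} : Set G) := by
    rw [hH, Subgroup.closure_le]
    rintro x (rfl | rfl)
    · rw [SetLike.mem_coe, Subgroup.mem_centralizer_iff]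
      rintro g (rfl | rfl)
      · rfl
      · exact hcom.symm.eq
    · rw [SetLike.mem_coe, Subgroup.mem_centralizer_iff]
      rintro g (rfl | rfl)
      · exact hcom.eq
      · rfl
  have hcomm : ∀ x y : ↥H, x * y = y * x := by
    have h2 : H ≤ Subgroup.centralizer (H : Set G) := by
      rw [hH, Subgroup.closure_le]
      rintro x (rfl | rfl) <;>
      · rw [SetLike.mem_coe, Subgroup.mem_centralizer_iff]
        intro g hg
        have := hcent hg
        rw [Subgroup.mem_centralizer_iff] at this
        exact (this _ (by simp)).symm
    intro x y
    have := h2 y.2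
    rw [Subgroup.mem_centralizer_iff] at this
    exact Subtype.ext (this _ x.2)
  -- H is cyclic
  obtain ⟨lam', _, hlH⟩ := (Nat.dvd_prime_pow Nat.prime_two).1
    (hcard ▸ Subgroup.card_subgroup_dvd_card H)
  have hcyc : IsCyclic ↥H := by
    apply UIQ.isCyclic_comm hcomm lam' hlH
    intro x y hx hy hx1 hy1
    have hx' : (x : G) ^ 2 = 1 := by rw [← Subgroup.coe_pow, hx]; rfl
    have hy' : (y : G) ^ 2 = 1 := by rw [← Subgroup.coe_pow, hy]; rfl
    have hxne : (x : G) ≠ 1 := fun h => hx1 (Subtype.ext (by simp [h]))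
    have hyne : (y : G) ≠ 1 := fun h => hy1 (Subtype.ext (by simp [h]))
    have := hu x y hx' hy' hxne hyne
    exact Subtype.ext this
  obtain ⟨c, hc⟩ := hcyc.exists_generator
  -- |H| = orderOf c ≤ orderOf a = |zpowers a| and zpowers a ≤ H
  have h1 : Subgroup.zpowers a ≤ H := (Subgroup.zpowers_le).2 haH
  have h2 : Nat.card H ≤ Nat.card (Subgroup.zpowers a) := by
    rw [Nat.card_zpowers]
    have hz : Subgroup.zpowers c = (⊤ : Subgroup ↥H) := by
      rw [Subgroup.eq_top_iff']
      exact hc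
    have : Nat.card ↥H = orderOf c := by
      rw [← Nat.card_zpowers, hz, Subgroup.card_top]
    rw [this, ← Subgroup.orderOf_coe c]
    exact hmax _
  have : Subgroup.zpowers a = H := by
    have hsub : (Subgroup.zpowers a : Set G) ⊆ (H : Set G) := h1
    have hc1 : Nat.card H ≤ Nat.card (Subgroup.zpowers a) := h2
    have := Set.eq_of_subset_of_ncard_le hsub
      (by rwa [← Nat.card_coe_set_eq, ← Nat.card_coe_set_eq]) (Set.toFinite _)
    exact SetLike.ext' this
  rw [this]; exact hbH

end

lemma UIQ.coprime_two_odd {v : ℤ} (h : Odd v) : IsCoprime (2 : ℤ) v := by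
  obtain ⟨c, rfl⟩ := h
  exact ⟨-c, 1, by ring⟩

lemma UIQ.int_case {m : ℕ} (hm : 2 ≤ m) {k t : ℤ}
    (hk2 : (2 ^ m : ℤ) ∣ k * k - 1)
    (hk1 : ¬(2 ^ m : ℤ) ∣ k - 1)
    (hR1 : (2 ^ m : ℤ) ∣ t * (k - 1))
    (hT0 : ¬(2 ^ m : ℤ) ∣ t)
    (hno : ∀ s : ℤ, ¬(2 ^ m : ℤ) ∣ t + s * (k + 1)) :
    (2 ^ m : ℤ) ∣ k + 1 ∧ (2 ^ m : ℤ) ∣ t - 2 ^ (m - 1) := by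
  have h2m : (2 ^ m : ℤ) = 2 ^ (m - 1) * 2 := by
    rw [← pow_succ]
    congr 1
    omega
  have h2m' : (2 ^ m : ℤ) = 2 ^ (m - 2) * 4 := by
    have : (4 : ℤ) = 2 ^ 2 := by norm_num
    rw [this, ← pow_add]
    congr 1
    omega
  -- k is odd
  have hkodd : Odd k := by
    rcases Int.even_or_odd k with ⟨c, hc⟩ | h
    · exfalso
      have h4 : (4 : ℤ) ∣ k * k - 1 := dvd_trans ⟨2 ^ (m - 2), by rw [h2m']; ring⟩ hk2
      obtain ⟨d, hd⟩ := h4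
      have : k * k - 1 = 4 * (c * c) - 1 := by rw [hc]; ring
      omega
    · exact h
  obtain ⟨u, hku⟩ := hkodd
  -- main disjunction
  have hdisj : (2 ^ (m - 1) : ℤ) ∣ k - 1 ∨ (2 ^ (m - 1) : ℤ) ∣ k + 1 := by
    have h4u : (2 ^ (m - 2) : ℤ) * 4 ∣ (u * (u + 1)) * 4 := by
      rw [← h2m']
      have : (u * (u + 1)) * 4 = k * k - 1 := by rw [hku]; ring
      rw [this]; exact hk2
    have huu : (2 ^ (m - 2) : ℤ) ∣ u * (u + 1) :=
      (mul_dvd_mul_iff_right (by norm_num : (4:ℤ) ≠ 0)).1 h4u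
    have h2m'' : (2 ^ (m - 1) : ℤ) = 2 ^ (m - 2) * 2 := by
      rw [← pow_succ]; congr 1; omega
    rcases Int.even_or_odd u with ⟨c, hc⟩ | hodd
    · left
      have : IsCoprime ((2:ℤ) ^ (m - 2)) (u + 1) :=
        (UIQ.coprime_two_odd ⟨c, by omega⟩).pow_left
      have hu2 : (2 ^ (m - 2) : ℤ) ∣ u :=
        this.dvd_of_dvd_mul_right (show (2 ^ (m-2) : ℤ) ∣ u * (u+1) from huu)
      obtain ⟨e, he⟩ := hu2
      exact ⟨e, by rw [hku, h2m'', he]; ring⟩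
    · right
      have : IsCoprime ((2:ℤ) ^ (m - 2)) u := (UIQ.coprime_two_odd hodd).pow_left
      have hu2 : (2 ^ (m - 2) : ℤ) ∣ u + 1 := this.dvd_of_dvd_mul_left huu
      obtain ⟨e, he⟩ := hu2
      refine ⟨e, ?_⟩
      rw [hku, h2m'', show (2:ℤ) * u + 1 + 1 = 2 * (u + 1) by ring, he]
      ring
  by_cases hfin : (2 ^ m : ℤ) ∣ k + 1
  · refine ⟨hfin, ?_⟩
    -- 2^m ∣ 2t hence 2^{m-1} ∣ t
    have h2t : (2 ^ m : ℤ) ∣ 2 * t := by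
      have h1 : (2 ^ m : ℤ) ∣ t * (k + 1) := Dvd.dvd.mul_left hfin t
      have : 2 * t = t * (k + 1) - t * (k - 1) := by ring
      rw [this]
      exact dvd_sub h1 hR1
    have ht2 : (2 ^ (m - 1) : ℤ) ∣ t := by
      have h1 : (2:ℤ) ^ (m - 1) * 2 ∣ t * 2 := by
        rw [← h2m, mul_comm t 2]; exact h2t
      exact (mul_dvd_mul_iff_right (by norm_num : (2:ℤ) ≠ 0)).1 h1
    obtain ⟨w2, hw2⟩ := ht2
    rcases Int.even_or_odd w2 with ⟨c, hc⟩ | ⟨c, hc⟩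
    · exfalso
      apply hT0
      rw [hw2, hc, h2m]
      exact ⟨c, by ring⟩
    · refine ⟨c, ?_⟩
      rw [hw2, hc, h2m]
      ring
  · exfalso
    rcases hdisj with hA | hB
    · -- Case A
      obtain ⟨w, hw⟩ := hA
      have hwodd : Odd w := by
        rcases Int.even_or_odd w with ⟨c, hc⟩ | h
        · exfalso
          apply hk1
          rw [hw, h2m, hc]
          exact ⟨c, by ring⟩
        · exact h
      rcases Nat.lt_or_ge m 3 with hm3 | hm3
      · -- m = 2 : k+1 = 2w+2 with w odd gives 4 ∣ k+1
        have hmeq : m = 2 := by omega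
        apply hfin
        obtain ⟨c, hc⟩ := hwodd
        rw [hmeq]
        refine ⟨c + 1, ?_⟩
        have : k - 1 = 2 * w := by rw [hw, hmeq]; norm_num
        omega
      · -- m ≥ 3
        have hteven : (2:ℤ) ∣ t := by
          have h1 : (2:ℤ) ^ (m - 1) * 2 ∣ 2 ^ (m - 1) * (t * w) := by
            rw [← h2m]
            have : (2:ℤ) ^ (m - 1) * (t * w) = t * (k - 1) := by rw [hw]; ring
            rw [this]; exact hR1
          have h2 : (2:ℤ) ∣ t * w :=
            (mul_dvd_mul_iff_left (a := (2:ℤ) ^ (m - 1)) (by positivity)).1 h1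
          exact (UIQ.coprime_two_odd hwodd).dvd_of_dvd_mul_right h2
        obtain ⟨t', ht'⟩ := hteven
        -- v = 2^{m-2} w + 1 is odd
        set v : ℤ := 2 ^ (m - 2) * w + 1 with hv
        have hvodd : Odd v := by
          refine ⟨2 ^ (m - 3) * w, ?_⟩
          rw [hv]
          have : (2:ℤ) ^ (m - 2) = 2 * 2 ^ (m - 3) := by
            rw [← pow_succ']; congr 1; omega
          rw [this]; ring
        obtain ⟨x, y, hxy⟩ :=
          ((UIQ.coprime_two_odd hvodd).pow_left : IsCoprime ((2:ℤ) ^ (m - 1)) v)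
        apply hno (-(t' * y))
        refine ⟨t' * x, ?_⟩
        have hkv : k + 1 = 2 * v := by
          rw [hv]
          have : (2:ℤ) ^ (m - 1) = 2 * 2 ^ (m - 2) := by rw [← pow_succ']; congr 1; omega
          rw [show k = 2 ^ (m-1) * w + 1 by omega, this]
          ring
        calc t + -(t' * y) * (k + 1) = 2 * t' + -(t' * y) * (2 * v) := by rw [← ht', hkv]
          _ = 2 * t' * (x * 2 ^ (m - 1) + y * v) + -(t' * y) * (2 * v) := by rw [hxy]; ring
          _ = 2 ^ m * (t' * x) := by rw [h2m]; ring
    · -- Case B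
      obtain ⟨w, hw⟩ := hB
      have hwodd : Odd w := by
        rcases Int.even_or_odd w with ⟨c, hc⟩ | h
        · exfalso
          apply hfin
          rw [hw, h2m, hc]
          exact ⟨c, by ring⟩
        · exact h
      rcases Nat.lt_or_ge m 3 with hm3 | hm3
      · have hmeq : m = 2 := by omega
        apply hk1
        obtain ⟨c, hc⟩ := hwodd
        rw [hmeq]
        refine ⟨c, ?_⟩
        have : k + 1 = 2 * w := by rw [hw, hmeq]; norm_num
        omega
      · -- m ≥ 3
        set q : ℤ := 2 ^ (m - 2) * w - 1 with hq
        have hqodd : Odd q := by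
          refine ⟨2 ^ (m - 3) * w - 1, ?_⟩
          rw [hq]
          have : (2:ℤ) ^ (m - 2) = 2 * 2 ^ (m - 3) := by rw [← pow_succ']; congr 1; omega
          rw [this]; ring
        have hkq : k - 1 = 2 * q := by
          rw [hq]
          have : (2:ℤ) ^ (m - 1) = 2 * 2 ^ (m - 2) := by rw [← pow_succ']; congr 1; omega
          rw [show k = 2 ^ (m-1) * w - 1 by omega, this]
          ring
        have ht2 : (2 ^ (m - 1) : ℤ) ∣ t := by
          have h1 : (2:ℤ) ^ (m - 1) * 2 ∣ (t * q) * 2 := by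
            rw [← h2m]
            have : (t * q) * 2 = t * (k - 1) := by rw [hkq]; ring
            rw [this]; exact hR1
          have h2 : (2:ℤ) ^ (m - 1) ∣ t * q :=
            (mul_dvd_mul_iff_right (by norm_num : (2:ℤ) ≠ 0)).1 h1
          exact ((UIQ.coprime_two_odd hqodd).pow_left).dvd_of_dvd_mul_right h2
        obtain ⟨τ, hτ⟩ := ht2
        have hτodd : Odd τ := by
          rcases Int.even_or_odd τ with ⟨c, hc⟩ | h
          · exfalso
            apply hT0
            rw [hτ, h2m, hc]
            exact ⟨c, by ring⟩
          · exact h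
        apply hno 1
        obtain ⟨c, hc⟩ := hτodd
        obtain ⟨d, hd⟩ := hwodd
        refine ⟨c + d + 1, ?_⟩
        have hkw : k + 1 = 2 ^ (m - 1) * w := hw
        rw [hτ, hkw, one_mul, h2m, hc, hd]
        ring

section
variable {G : Type*} [Group G] [Finite G]

lemma UIQ.conj_lemma
    (hu : ∀ x y : G, x ^ 2 = 1 → y ^ 2 = 1 → x ≠ 1 → y ≠ 1 → x = y)
    {a : G} {m : ℕ} (hm : 2 ≤ m) (hord : orderOf a = 2 ^ m)
    (hCA : ∀ g : G, Commute a g → g ∈ zpowers a)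
    {b : G} (hbA : b ∉ zpowers a) (hb2 : b ^ 2 ∈ zpowers a)
    (hbc : b * a * b⁻¹ ∈ zpowers a) :
    b * a * b⁻¹ = a⁻¹ ∧ b ^ 2 = a ^ 2 ^ (m - 1) := by
  have hzd : ∀ s : ℤ, a ^ s = 1 ↔ (2 ^ m : ℤ) ∣ s := by
    intro s
    rw [← orderOf_dvd_iff_zpow_eq_one, hord]
    push_cast
    rfl
  have aeq : ∀ s r : ℤ, a ^ s = a ^ r ↔ (2 ^ m : ℤ) ∣ s - r := by
    intro s r
    rw [← hzd, zpow_sub, mul_inv_eq_one]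
  obtain ⟨k, hk⟩ := mem_zpowers_iff.1 hbc
  obtain ⟨t, ht⟩ := mem_zpowers_iff.1 hb2
  have hpow : ((2:ℤ) ^ m) = 2 ^ (m - 1) * 2 := by
    rw [← pow_succ]; congr 1; omega
  have hBB : ∀ x : G, b * (b * x * b⁻¹) * b⁻¹ = b ^ 2 * x * (b ^ 2)⁻¹ := by
    intro x
    rw [pow_two]
    group
  have hconj : ∀ s : ℤ, b * a ^ s * b⁻¹ = a ^ (k * s) := by
    intro s
    have h1 : (MulAut.conj b) (a ^ s) = ((MulAut.conj b) a) ^ s := map_zpow _ _ _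
    simp only [MulAut.conj_apply] at h1
    rw [h1, ← hk, ← zpow_mul]
  -- k * k ≡ 1
  have hk2 : (2 ^ m : ℤ) ∣ k * k - 1 := by
    rw [← aeq (k * k) 1, zpow_one]
    have h1 : b * (b * a * b⁻¹) * b⁻¹ = a ^ (k * k) := by
      rw [← hk]; exact hconj k
    have h2 : b * (b * a * b⁻¹) * b⁻¹ = a := by
      rw [hBB a, ← ht]
      have hc : Commute (a ^ t) a := (Commute.refl a).zpow_left t
      rw [hc.eq, mul_assoc, mul_inv_cancel, mul_one]
    rw [← h1, h2]
  -- k ≢ 1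
  have hk1 : ¬(2 ^ m : ℤ) ∣ k - 1 := by
    intro hdvd
    have h0 : a ^ k = a ^ (1 : ℤ) := (aeq k 1).2 hdvd
    rw [zpow_one] at h0
    have h2 : b * a * b⁻¹ = a := hk.symm.trans h0
    apply hbA
    apply hCA
    have : a * b = b * a := by
      conv_lhs => rw [← h2]
      group
    exact this
  -- t * (k - 1) ≡ 0
  have hR1 : (2 ^ m : ℤ) ∣ t * (k - 1) := by
    have h1 : b * a ^ t * b⁻¹ = a ^ (k * t) := hconj t
    have h2 : b * a ^ t * b⁻¹ = a ^ t := by rw [ht]; group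
    have h3 := (aeq (k * t) t).1 (h1.symm.trans h2)
    have : k * t - t = t * (k - 1) := by ring
    rwa [this] at h3
  -- squares of b * a^s
  have hsq : ∀ s : ℤ, (b * a ^ s) ^ 2 = a ^ (t + s * (k + 1)) := by
    intro s
    have h1 : (b * a ^ s) ^ 2 = b * a ^ s * b⁻¹ * b ^ 2 * a ^ s := by
      rw [pow_two, pow_two]; group
    rw [h1, hconj s, ← ht, ← zpow_add, ← zpow_add]
    congr 1
    ring
  -- the canonical involution a^(2^(m-1))
  have hz2 : (a ^ ((2:ℤ) ^ (m - 1))) ^ 2 = 1 := by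
    rw [← zpow_natCast (a ^ ((2:ℤ) ^ (m - 1))) 2, ← zpow_mul]
    apply (hzd _).2
    have h22 : ((2:ℕ):ℤ) = 2 := rfl
    rw [h22, ← hpow]
  have hz1 : a ^ ((2:ℤ) ^ (m - 1)) ≠ 1 := by
    intro h
    have hdvd := (hzd _).1 h
    have hcast : ((2:ℤ) ^ m) = ((2 ^ m : ℕ) : ℤ) := by push_cast; rfl
    have hcast' : ((2:ℤ) ^ (m - 1)) = ((2 ^ (m - 1) : ℕ) : ℤ) := by push_cast; rfl
    rw [hcast, hcast', Int.natCast_dvd_natCast] at hdvd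
    have := (Nat.pow_dvd_pow_iff_le_right (by norm_num : 1 < 2)).1 hdvd
    omega
  have hno : ∀ s : ℤ, ¬(2 ^ m : ℤ) ∣ t + s * (k + 1) := by
    intro s hdvd
    have h1 : (b * a ^ s) ^ 2 = 1 := by rw [hsq s]; exact (hzd _).2 hdvd
    have hne : b * a ^ s ≠ 1 := by
      intro h
      apply hbA
      have hb : b = (a ^ s)⁻¹ := eq_inv_of_mul_eq_one_left h
      rw [hb, ← zpow_neg]
      exact ⟨-s, rfl⟩
    have heq := hu (b * a ^ s) (a ^ ((2:ℤ) ^ (m - 1))) h1 hz2 hne hz1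
    apply hbA
    have hb : b = a ^ ((2:ℤ) ^ (m - 1)) * (a ^ s)⁻¹ := by
      rw [← heq]; group
    rw [hb, ← zpow_neg, ← zpow_add]
    exact ⟨_, rfl⟩
  have hT0 : ¬(2 ^ m : ℤ) ∣ t := by
    have := hno 0
    simpa using this
  obtain ⟨hKfin, hTfin⟩ := UIQ.int_case hm hk2 hk1 hR1 hT0 hno
  constructor
  · have h0 : a ^ k = a ^ (-1 : ℤ) := by
      apply (aeq _ _).2
      simpa [sub_neg_eq_add] using hKfin
    rw [← hk, h0, zpow_neg_one]
  · have h0 : a ^ t = a ^ ((2:ℤ) ^ (m - 1)) := (aeq _ _).2 hTfin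
    have hcast' : ((2:ℤ) ^ (m - 1)) = ((2 ^ (m - 1) : ℕ) : ℤ) := by push_cast; rfl
    rw [← ht, h0, hcast', zpow_natCast]

end

section
variable {G : Type*} [Group G] [Finite G]

lemma UIQ.conj_sq_one {g x : G} (hx : x ^ 2 = 1) : (g * x * g⁻¹) ^ 2 = 1 := by
  have : (g * x * g⁻¹) ^ 2 = g * x ^ 2 * g⁻¹ := by
    rw [pow_two, pow_two]; group
  rw [this, hx, mul_one, mul_inv_cancel]

lemma UIQ.no_exponent_four {lam : ℕ} (hlam : 4 ≤ lam) (hcard : Nat.card G = 2 ^ lam)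
    (hu : ∀ x y : G, x ^ 2 = 1 → y ^ 2 = 1 → x ≠ 1 → y ≠ 1 → x = y)
    (hCA4 : ∀ x : G, orderOf x = 4 → ∀ y : G, Commute x y → y ∈ zpowers x)
    (hmax4 : ∀ x : G, orderOf x ≤ 4) : False := by
  classical
  letI := Fintype.ofFinite G
  have hord2 : ∀ x : G, orderOf x ∣ 2 ^ lam := fun x => by
    rw [← hcard, Nat.card_eq_fintype_card]
    exact orderOf_dvd_card
  -- the involution z
  obtain ⟨z, hz⟩ : ∃ z : G, orderOf z = 2 := by
    apply exists_prime_orderOf_dvd_card 2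
    rw [← Nat.card_eq_fintype_card, hcard]
    exact dvd_pow_self 2 (by omega)
  have hz2 : z ^ 2 = 1 := by rw [← hz]; exact pow_orderOf_eq_one z
  have hz1 : z ≠ 1 := by
    intro h; rw [h, orderOf_one] at hz; omega
  have hzc : z ∈ Subgroup.center G := by
    rw [Subgroup.mem_center_iff]
    intro g
    have h1 : (g * z * g⁻¹) ^ 2 = 1 := UIQ.conj_sq_one hz2
    have h2 : g * z * g⁻¹ ≠ 1 := by
      intro h
      apply hz1
      have : z = g⁻¹ * 1 * g := by
        rw [← h]; group
      rw [this]; group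
    have h3 := hu _ _ h1 hz2 h2 hz1
    calc g * z = (g * z * g⁻¹) * g := by group
      _ = z * g := by rw [h3]
  -- order of any non-1, non-z element is 4
  have horder4 : ∀ x : G, x ≠ 1 → x ≠ z → orderOf x = 4 := by
    intro x hx1 hxz
    obtain ⟨j, hj, hje⟩ := (Nat.dvd_prime_pow Nat.prime_two).1 (hord2 x)
    have hj1 : j ≠ 0 := by
      intro h; rw [h, pow_zero] at hje
      exact hx1 (orderOf_eq_one_iff.1 hje)
    have hj2 : j ≠ 1 := by
      intro h
      rw [h, pow_one] at hje
      apply hxz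
      apply hu x z _ hz2 hx1 hz1
      rw [← hje]; exact pow_orderOf_eq_one x
    have hle := hmax4 x
    rw [hje] at hle ⊢
    have : j ≤ 2 := by
      by_contra hcon
      push_neg at hcon
      have : 2 ^ 3 ≤ 2 ^ j := Nat.pow_le_pow_right (by norm_num) (by omega)
      omega
    have : j = 2 := by omega
    rw [this]
    norm_num
  -- center is {1, z}
  have hcen : Subgroup.center G = zpowers z := by
    apply le_antisymm
    · intro x hx
      by_cases hx1 : x = 1
      · rw [hx1]; exact one_mem _
      by_cases hxz : x = z
      · rw [hxz]; exact mem_zpowers z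
      · exfalso
        have h4 : orderOf x = 4 := horder4 x hx1 hxz
        have : (⊤ : Subgroup G) ≤ zpowers x := by
          intro y _
          apply hCA4 x h4
          rw [Subgroup.mem_center_iff] at hx
          exact (hx y).symm
        have hle : Nat.card G ≤ 4 := by
          calc Nat.card G = Nat.card (⊤ : Subgroup G) := by rw [Subgroup.card_top]
            _ ≤ Nat.card (zpowers x) := Subgroup.card_le_of_le this
            _ = 4 := by rw [Nat.card_zpowers, h4]
        rw [hcard] at hle
        have : 2 ^ 4 ≤ 2 ^ lam := Nat.pow_le_pow_right (by norm_num) hlam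
        omega
    · rw [zpowers_le]
      exact hzc
  have hcenc : Nat.card (Subgroup.center G) = 2 := by
    rw [hcen, Nat.card_zpowers, hz]
  -- each noncentral class has cardinality 2^(lam - 2)
  have hclass : ∀ x : ConjClasses G, x ∈ ConjClasses.noncenter G →
      Nat.card x.carrier = 2 ^ (lam - 2) := by
    intro x hx
    obtain ⟨g, rfl⟩ := x.exists_rep
    have hgnc : g ∉ Subgroup.center G := by
      intro hg
      rw [ConjClasses.mem_noncenter] at hx
      apply hx.not_subsingleton
      intro u hu' v hv'
      rw [ConjClasses.mem_carrier_iff_mk_eq, ConjClasses.mk_eq_mk_iff_isConj] at hu' hv'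
      obtain ⟨c, hc⟩ := hu'
      obtain ⟨d, hd⟩ := hv'
      rw [Subgroup.mem_center_iff] at hg
      have hu'' : u = g := by
        have h5 : (c : G) * u = g * (c : G) := hc
        rw [← hg (c : G)] at h5
        exact mul_left_cancel h5
      have hv'' : v = g := by
        have h5 : (d : G) * v = g * (d : G) := hd
        rw [← hg (d : G)] at h5
        exact mul_left_cancel h5
      rw [hu'', hv'']
    have hg1 : g ≠ 1 := fun h => hgnc (h ▸ (Subgroup.center G).one_mem)
    have hgz : g ≠ z := fun h => hgnc (h ▸ hzc)
    have hg4 : orderOf g = 4 := horder4 g hg1 hgz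
    -- centralizer = zpowers g
    have hcent : Subgroup.centralizer {g} = zpowers g := by
      apply le_antisymm
      · intro y hy
        rw [Subgroup.mem_centralizer_iff] at hy
        exact hCA4 g hg4 y (hy g (Set.mem_singleton g))
      · rw [zpowers_le, Subgroup.mem_centralizer_iff]
        intro y hy
        rw [Set.mem_singleton_iff] at hy
        rw [hy]
    have hcentcard : Nat.card (Subgroup.centralizer ({g} : Set G)) = 4 := by
      rw [hcent, Nat.card_zpowers, hg4]
    -- stabilizer has the same cardinality as centralizer
    have hstab : Nat.card (MulAction.stabilizer (ConjAct G) g) = 4 := by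
      rw [← hcentcard]
      apply Nat.card_congr
      have hdir1 : ∀ c : ConjAct G, c ∈ MulAction.stabilizer (ConjAct G) g →
          ConjAct.ofConjAct c ∈ Subgroup.centralizer ({g} : Set G) := by
        intro c hc
        rw [MulAction.mem_stabilizer_iff, ConjAct.smul_def] at hc
        rw [Subgroup.mem_centralizer_iff]
        rintro h hh
        rw [Set.mem_singleton_iff] at hh
        subst hh
        calc h * ConjAct.ofConjAct c = (ConjAct.ofConjAct c * h * (ConjAct.ofConjAct c)⁻¹) *
              ConjAct.ofConjAct c := by rw [hc]
          _ = ConjAct.ofConjAct c * h := by group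
      have hdir2 : ∀ y : G, y ∈ Subgroup.centralizer ({g} : Set G) →
          ConjAct.toConjAct y ∈ MulAction.stabilizer (ConjAct G) g := by
        intro y hy
        rw [Subgroup.mem_centralizer_iff] at hy
        have h5 := hy g (Set.mem_singleton g)
        rw [MulAction.mem_stabilizer_iff, ConjAct.smul_def, ConjAct.ofConjAct_toConjAct]
        rw [← h5]
        group
      exact ⟨fun c => ⟨ConjAct.ofConjAct c.1, hdir1 c.1 c.2⟩,
        fun y => ⟨ConjAct.toConjAct y.1, hdir2 y.1 y.2⟩,
        fun c => Subtype.ext (by simp),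
        fun y => Subtype.ext (by simp)⟩
    -- orbit-stabilizer
    have horb : Nat.card ((ConjClasses.mk g).carrier) * 4 = 2 ^ lam := by
      have h1 := MulAction.card_orbit_mul_card_stabilizer_eq_card_group (ConjAct G) g
      rw [← Nat.card_eq_fintype_card, ← Nat.card_eq_fintype_card, ← Nat.card_eq_fintype_card,
        hstab] at h1
      have hoc : Nat.card (MulAction.orbit (ConjAct G) g)
          = Nat.card ((ConjClasses.mk g).carrier) :=
        Nat.card_congr (Equiv.setCongr (ConjAct.orbit_eq_carrier_conjClasses g))
      have hGC : Nat.card (ConjAct G) = 2 ^ lam := by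
        rw [← hcard]
        exact Nat.card_congr ConjAct.toConjAct.toEquiv.symm
      rw [hoc, hGC] at h1
      exact h1
    have h2lam : 2 ^ lam = 2 ^ (lam - 2) * 4 := by
      have : (4:ℕ) = 2 ^ 2 := by norm_num
      rw [this, ← pow_add]
      congr 1
      omega
    rw [h2lam] at horb
    exact Nat.eq_of_mul_eq_mul_right (by norm_num) horb
  -- class equation
  have hfin : (ConjClasses.noncenter G).Finite := Set.toFinite _
  have hce := Group.nat_card_center_add_sum_card_noncenter_eq_card G
  rw [hcenc] at hce
  have hsum : ∑ᶠ x ∈ ConjClasses.noncenter G, Nat.card x.carrier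
      = ∑ x ∈ hfin.toFinset, Nat.card x.carrier :=
    finsum_mem_eq_sum_of_subset _ (fun x hx => hfin.mem_toFinset.2 hx.1)
      (fun x hx => hfin.mem_toFinset.1 hx)
  have hdvd : 2 ^ (lam - 2) ∣ ∑ x ∈ hfin.toFinset, Nat.card x.carrier :=
    Finset.dvd_sum fun x hx => by rw [hclass x (hfin.mem_toFinset.1 hx)]
  rw [hsum] at hce
  have hdvd2 : 2 ^ (lam - 2) ∣ 2 ^ lam := pow_dvd_pow 2 (by omega)
  have hdvd3 : 2 ^ (lam - 2) ∣ 2 := by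
    have h6 := Nat.dvd_sub hdvd2 hdvd
    rwa [show 2 ^ lam - (∑ x ∈ hfin.toFinset, Nat.card x.carrier) = 2 by omega] at h6
  have : 2 ^ (lam - 2) ≤ 2 := Nat.le_of_dvd (by norm_num) hdvd3
  have : 2 ^ 2 ≤ 2 ^ (lam - 2) := Nat.pow_le_pow_right (by norm_num) (by omega)
  omega

end

lemma UIQ.subgroup_eq_of_le_of_card_le {G : Type*} [Group G] [Finite G] {H K : Subgroup G}
    (h : H ≤ K) (hc : Nat.card K ≤ Nat.card H) : H = K := by
  apply SetLike.ext'
  apply Set.eq_of_subset_of_ncard_le h _ (Set.toFinite _)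
  rwa [← Nat.card_coe_set_eq, ← Nat.card_coe_set_eq]

theorem unique_involution_cyclic_or_quaternion
    (lam : ℕ) (hlam : 3 ≤ lam)
    (G : Type*) [Group G] (hcard : Nat.card G = 2 ^ lam)
    (huniq : ∃! H : Subgroup G, Nat.card H = 2) :
    IsCyclic G ∨ Nonempty (G ≃* QuaternionGroup (2 ^ (lam - 2))) := by
  have hfinG : Finite G := Nat.finite_of_card_ne_zero (by rw [hcard]; positivity)
  haveI : Fact (Nat.Prime 2) := ⟨Nat.prime_two⟩
  -- pairwise uniqueness of involutions
  have hu : ∀ x y : G, x ^ 2 = 1 → y ^ 2 = 1 → x ≠ 1 → y ≠ 1 → x = y := by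
    intro x y hx hy hx1 hy1
    obtain ⟨H0, _, hH0u⟩ := huniq
    have hox : orderOf x = 2 := orderOf_eq_prime hx hx1
    have hoy : orderOf y = 2 := orderOf_eq_prime hy hy1
    have h1 : zpowers x = H0 := hH0u _ (by
      show Nat.card (zpowers x) = 2
      rw [Nat.card_zpowers, hox])
    have h2 : zpowers y = H0 := hH0u _ (by
      show Nat.card (zpowers y) = 2
      rw [Nat.card_zpowers, hoy])
    have hxm : x ∈ zpowers y := by rw [h2, ← h1]; exact mem_zpowers x
    obtain ⟨s, hs⟩ := mem_zpowers_iff.1 hxm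
    have hy2 : y ^ (2:ℤ) = 1 := by
      have : y ^ (2:ℤ) = y ^ (2:ℕ) := by norm_cast
      rw [this, hy]
    rcases Int.even_or_odd s with ⟨c, hc⟩ | ⟨c, hc⟩
    · exfalso
      apply hx1
      rw [← hs, hc, show c + c = 2 * c by ring, zpow_mul, hy2, one_zpow]
    · rw [← hs, hc, zpow_add, zpow_mul, hy2, one_zpow, one_mul, zpow_one]
  by_cases habel : ∀ x y : G, x * y = y * x
  · exact Or.inl (UIQ.isCyclic_comm habel lam hcard hu)
  right
  push_neg at habel
  obtain ⟨x0, y0, hxy0⟩ := habel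
  -- element of maximal order
  obtain ⟨a, hmax⟩ := Finite.exists_max (fun x : G => orderOf x)
  have horddvd : ∀ x : G, orderOf x ∣ 2 ^ lam := fun x => hcard ▸ orderOf_dvd_natCard x
  obtain ⟨m, hmlam, hom⟩ := (Nat.dvd_prime_pow Nat.prime_two).1 (horddvd a)
  have hCA : ∀ g : G, Commute a g → g ∈ zpowers a := fun g hg =>
    UIQ.commute_mem hcard hu hmax hg
  -- m ≥ 2
  have hm2 : 2 ≤ m := by
    by_contra hcon
    push_neg at hcon
    apply hxy0
    have hsq : ∀ x : G, x ^ 2 = 1 := by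
      intro x
      apply orderOf_dvd_iff_pow_eq_one.1
      obtain ⟨j, _, hje⟩ := (Nat.dvd_prime_pow Nat.prime_two).1 (horddvd x)
      have h1 : orderOf x ≤ 2 ^ m := hom ▸ hmax x
      have h2 : (2:ℕ) ^ m ≤ 2 ^ 1 := Nat.pow_le_pow_right (by norm_num) (by omega)
      rw [hje] at h1 ⊢
      have hj1 : j ≤ 1 := by
        by_contra hj2
        have : (2:ℕ) ^ 2 ≤ 2 ^ j := Nat.pow_le_pow_right (by norm_num) (by omega)
        omega
      exact pow_dvd_pow 2 (by omega : j ≤ 1) |>.trans (by norm_num)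
    have hinv : ∀ x : G, x⁻¹ = x := fun x => by
      have := hsq x
      rw [pow_two] at this
      exact inv_eq_of_mul_eq_one_left this
    calc x0 * y0 = (x0 * y0)⁻¹ := (hinv _).symm
      _ = y0⁻¹ * x0⁻¹ := mul_inv_rev x0 y0
      _ = y0 * x0 := by rw [hinv, hinv]
  set A := zpowers a with hA
  have hAne : A ≠ ⊤ := by
    intro h
    apply hxy0
    have h0 : ∀ g : G, g ∈ A := fun g => h ▸ Subgroup.mem_top g
    obtain ⟨i, hi⟩ := mem_zpowers_iff.1 (h0 x0)
    obtain ⟨j, hj⟩ := mem_zpowers_iff.1 (h0 y0)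
    rw [← hi, ← hj]
    exact ((Commute.refl a).zpow_zpow i j).eq
  -- normalizer condition
  have hNC : ∀ H : Subgroup G, H ≠ ⊤ → H < Subgroup.normalizer (H : Set G) := by
    have hpG : IsPGroup 2 G := IsPGroup.of_card hcard
    have hnil : Group.IsNilpotent G := hpG.isNilpotent
    intro H hH
    exact normalizerCondition_of_isNilpotent H (lt_top_iff_ne_top.2 hH)
  set N := Subgroup.normalizer (A : Set G) with hN
  have haA : a ∈ A := mem_zpowers a
  have haN : a ∈ N := (Subgroup.le_normalizer (H := A)) haA
  have hAN : A < N := hNC A hAne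
  have hconjA : ∀ g : G, g ∈ N → g * a * g⁻¹ ∈ A := fun g hg =>
    (Subgroup.mem_normalizer_iff.1 hg a).1 haA
  have hconjA' : ∀ g : G, g ∈ N → ∀ s : ℤ, g * a ^ s * g⁻¹ ∈ A := by
    intro g hg s
    have h1 : g * a ^ s * g⁻¹ = (g * a * g⁻¹) ^ s := by
      have h2 : (MulAut.conj g) (a ^ s) = ((MulAut.conj g) a) ^ s := map_zpow _ _ _
      simpa only [MulAut.conj_apply] using h2
    rw [h1]
    exact zpow_mem (hconjA g hg) s
  have hkey : ∀ g : G, g ∈ N → g ∉ A → g ^ 2 ∈ A →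
      g * a * g⁻¹ = a⁻¹ ∧ g ^ 2 = a ^ 2 ^ (m - 1) := fun g hgN hgA hg2 =>
    UIQ.conj_lemma hu hm2 hom hCA hgA hg2 (hconjA g hgN)
  -- every element of N \ A has square in A
  have hsqA : ∀ g : G, g ∈ N → g ∉ A → g ^ 2 ∈ A := by
    intro g hgN hgA
    have hPex : ∃ r : ℕ, g ^ 2 ^ r ∈ A := by
      refine ⟨lam, ?_⟩
      have : g ^ 2 ^ lam = 1 := by rw [← hcard]; exact pow_card_eq_one'
      rw [this]; exact one_mem A
    classical
    obtain ⟨r, hr, hrmin⟩ : ∃ r : ℕ, g ^ 2 ^ r ∈ A ∧ ∀ r' < r, g ^ 2 ^ r' ∉ A :=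
      ⟨Nat.find hPex, Nat.find_spec hPex, fun r' h => Nat.find_min hPex h⟩
    have hr1 : 1 ≤ r := by
      rcases Nat.eq_zero_or_pos r with h0 | h
      · exfalso; apply hgA; rw [← pow_one g, show (1:ℕ) = 2 ^ 0 by norm_num, ← h0]; exact hr
      · exact h
    by_cases hr2 : r = 1
    · rw [hr2, pow_one] at hr
      exact hr
    exfalso
    have hrge : 2 ≤ r := by omega
    set c := g ^ 2 ^ (r - 2) with hcdef
    have hcN : c ∈ N := pow_mem hgN _
    have hb1 : c ^ 2 = g ^ 2 ^ (r - 1) := by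
      rw [hcdef, ← pow_mul, ← pow_succ, show r - 2 + 1 = r - 1 by omega]
    have hb2' : (c ^ 2) ^ 2 = g ^ 2 ^ r := by
      rw [hb1, ← pow_mul, ← pow_succ, show r - 1 + 1 = r by omega]
    have hcA : c ∉ A := hrmin (r - 2) (by omega)
    have hc2A : c ^ 2 ∉ A := by
      intro h
      rw [hb1] at h
      exact hrmin (r - 1) (by omega) h
    obtain ⟨hcc, _⟩ := hkey (c ^ 2) (pow_mem hcN 2) hc2A (by rw [hb2']; exact hr)
    -- c * a * c⁻¹ = a ^ j with j ^ 2 ≡ -1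
    obtain ⟨j, hj⟩ := mem_zpowers_iff.1 (hconjA c hcN)
    have hjj : c ^ 2 * a * (c ^ 2)⁻¹ = a ^ (j * j) := by
      have h1 : c ^ 2 * a * (c ^ 2)⁻¹ = c * (c * a * c⁻¹) * c⁻¹ := by
        rw [pow_two]; group
      rw [h1, ← hj]
      have h2 : (MulAut.conj c) (a ^ j) = ((MulAut.conj c) a) ^ j := map_zpow _ _ _
      simp only [MulAut.conj_apply] at h2
      rw [h2, ← hj, ← zpow_mul]
    have hneg : a ^ (j * j) = a ^ (-1 : ℤ) := by
      rw [← hjj, hcc, zpow_neg_one]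
    have hdvd : ((2:ℤ) ^ m) ∣ j * j + 1 := by
      have h3 : a ^ (j * j + 1) = 1 := by
        rw [zpow_add, hneg, zpow_one, zpow_neg_one, inv_mul_cancel]
      have h4 := orderOf_dvd_iff_zpow_eq_one.2 h3
      rw [hom] at h4
      exact_mod_cast h4
    have h4 : (4:ℤ) ∣ j * j + 1 := by
      refine dvd_trans ?_ hdvd
      have : ((2:ℤ) ^ m) = 4 * 2 ^ (m - 2) := by
        rw [show (4:ℤ) = 2 ^ 2 by norm_num, ← pow_add]
        congr 1
        omega
      rw [this]
      exact ⟨2 ^ (m - 2), by ring⟩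
    rcases Int.even_or_odd j with ⟨d, hd⟩ | ⟨d, hd⟩
    · obtain ⟨e, he⟩ := h4
      have : j * j + 1 = 4 * (d * d) + 1 := by rw [hd]; ring
      omega
    · obtain ⟨e, he⟩ := h4
      have : j * j + 1 = 4 * (d * d + d) + 2 := by rw [hd]; ring
      omega
  -- pick b in N \ A
  obtain ⟨b, hbN, hbA⟩ := SetLike.exists_of_lt hAN
  obtain ⟨hbconj, hbsq⟩ := hkey b hbN hbA (hsqA b hbN hbA)
  have hinvb : b⁻¹ * a * b = a⁻¹ := by
    apply (MulAut.conj b).injective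
    rw [map_inv]
    simp only [MulAut.conj_apply]
    rw [hbconj]
    group
  have hcosets : ∀ g : G, g ∈ N → g ∉ A → g * b⁻¹ ∈ A := by
    intro g hgN hgA
    obtain ⟨hgc, _⟩ := hkey g hgN hgA (hsqA g hgN hgA)
    apply hCA
    have h5 : g * a⁻¹ * g⁻¹ = a := by
      have h6 := congrArg Inv.inv hgc
      rwa [show (g * a * g⁻¹)⁻¹ = g * a⁻¹ * g⁻¹ by group, inv_inv] at h6
    have h3 : g * b⁻¹ * a * (g * b⁻¹)⁻¹ = a := by
      have h7 : g * b⁻¹ * a * (g * b⁻¹)⁻¹ = g * (b⁻¹ * a * b) * g⁻¹ := by group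
      rw [h7, hinvb, h5]
    exact (mul_inv_eq_iff_eq_mul.1 h3).symm
  -- N is all of G
  have hNtop : N = ⊤ := by
    by_contra hNne
    have hNN := hNC N hNne
    obtain ⟨g0, hg0NN, hg0N⟩ := SetLike.exists_of_lt hNN
    by_cases hm3 : 3 ≤ m
    · have hclaim : ∀ g' : G, g' ∈ Subgroup.normalizer (N : Set G) → g' ∉ N → g' * a * g'⁻¹ ∈ A := by
        intro g' hg'NN hg'N
        have hga : g' * a * g'⁻¹ ∈ N := (Subgroup.mem_normalizer_iff.1 hg'NN a).1 haN
        by_contra hgaA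
        obtain ⟨_, hsq'⟩ := hkey _ hga hgaA (hsqA _ hga hgaA)
        have hgao : orderOf (g' * a * g'⁻¹) = 2 ^ m := by
          rw [← hom]
          have h9 := orderOf_injective (MulAut.conj g').toMonoidHom
            (MulEquiv.injective (MulAut.conj g')) a
          simpa [MulAut.conj_apply] using h9
        have hpows : (2:ℕ) ^ m = 2 ^ (m - 1) * 2 := by
          rw [← pow_succ]
          congr 1
          omega
        have h1 : orderOf ((g' * a * g'⁻¹) ^ 2) = 2 ^ (m - 1) := by
          rw [orderOf_pow, hgao]
          have hg2 : Nat.gcd (2 ^ m) 2 = 2 := by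
            rw [Nat.gcd_comm]
            exact Nat.gcd_eq_left (dvd_pow_self 2 (by omega))
          rw [hg2, hpows, Nat.mul_div_cancel _ (by norm_num)]
        rw [hsq'] at h1
        have h2 : orderOf (a ^ 2 ^ (m - 1) : G) = 2 := by
          rw [orderOf_pow, hom]
          have hg3 : Nat.gcd (2 ^ m) (2 ^ (m - 1)) = 2 ^ (m - 1) :=
            Nat.gcd_eq_right (pow_dvd_pow 2 (by omega))
          rw [hg3, hpows, Nat.mul_div_cancel_left _ (by positivity)]
        rw [h2] at h1
        have h3 : (2:ℕ) ^ 2 ≤ 2 ^ (m - 1) := Nat.pow_le_pow_right (by norm_num) (by omega)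
        omega
      apply hg0N
      show g0 ∈ Subgroup.normalizer (A : Set G)
      rw [Subgroup.mem_normalizer_iff]
      intro h
      constructor
      · intro hh
        obtain ⟨s, hs⟩ := mem_zpowers_iff.1 hh
        rw [← hs]
        have h1 : g0 * a ^ s * g0⁻¹ = (g0 * a * g0⁻¹) ^ s := by
          have h2 : (MulAut.conj g0) (a ^ s) = ((MulAut.conj g0) a) ^ s := map_zpow _ _ _
          simpa only [MulAut.conj_apply] using h2
        rw [h1]
        exact zpow_mem (hclaim g0 hg0NN hg0N) s
      · intro hh
        have hg0iNN : g0⁻¹ ∈ Subgroup.normalizer (N : Set G) := inv_mem hg0NN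
        have hg0iN : g0⁻¹ ∉ N := fun h' => hg0N (by simpa using inv_mem h')
        have h2 : h = g0⁻¹ * (g0 * h * g0⁻¹) * (g0⁻¹)⁻¹ := by group
        rw [h2]
        obtain ⟨s, hs⟩ := mem_zpowers_iff.1 hh
        rw [← hs]
        have h1 : g0⁻¹ * a ^ s * (g0⁻¹)⁻¹ = (g0⁻¹ * a * (g0⁻¹)⁻¹) ^ s := by
          have h3 : (MulAut.conj g0⁻¹) (a ^ s) = ((MulAut.conj g0⁻¹) a) ^ s := map_zpow _ _ _
          simpa only [MulAut.conj_apply] using h3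
        rw [h1]
        exact zpow_mem (hclaim g0⁻¹ hg0iNN hg0iN) s
    · -- m = 2
      have hmeq : m = 2 := by omega
      have hlam3 : lam = 3 := by
        by_contra hl
        refine UIQ.no_exponent_four (by omega) hcard hu ?_ ?_
        · intro x hx4 y hxy
          refine UIQ.commute_mem hcard hu ?_ hxy
          intro w
          rw [hx4]
          have hw := hmax w
          rw [hom, hmeq] at hw
          simpa using hw
        · intro x
          have hw := hmax x
          rw [hom, hmeq] at hw
          simpa using hw
      apply hNne
      apply Subgroup.eq_top_of_card_eq
      have hcA' : Nat.card A = 4 := by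
        rw [hA, Nat.card_zpowers, hom, hmeq]
        norm_num
      have hdvd1 : Nat.card A ∣ Nat.card N := Subgroup.card_dvd_of_le hAN.le
      have hdvd2 : Nat.card N ∣ Nat.card G := Subgroup.card_subgroup_dvd_card N
      rw [hcard, hlam3] at hdvd2
      rw [hcA'] at hdvd1
      norm_num at hdvd2
      have hne4 : Nat.card N ≠ 4 := by
        intro h4
        exact hAN.ne (UIQ.subgroup_eq_of_le_of_card_le hAN.le (by rw [h4, hcA']))
      have h8 : Nat.card N ≤ 8 := Nat.le_of_dvd (by norm_num) hdvd2
      have h0 : 0 < Nat.card N := Nat.card_pos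
      rw [hcard, hlam3]
      norm_num
      interval_cases (Nat.card N) <;> omega
  -- setup for the isomorphism
  set n : ℕ := 2 ^ (m - 1) with hn
  have hnpos : 0 < n := by rw [hn]; positivity
  haveI : NeZero n := ⟨by omega⟩
  haveI : NeZero (2 * n) := ⟨by omega⟩
  have h2n : 2 * n = 2 ^ m := by
    rw [hn, ← pow_succ']
    congr 1
    omega
  have horda : orderOf a = 2 * n := by rw [hom, h2n]
  set ψ : ZMod (2 * n) → G := fun i => a ^ i.val with hψdef
  have hmod : ∀ x : ℕ, a ^ (x % (2 * n)) = a ^ x := by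
    intro x
    conv_rhs => rw [← pow_mod_orderOf]
    rw [horda]
  have hψ_add : ∀ i j : ZMod (2 * n), ψ (i + j) = ψ i * ψ j := by
    intro i j
    show a ^ ((i + j).val) = a ^ i.val * a ^ j.val
    rw [ZMod.val_add, hmod, pow_add]
  have hψ0 : ψ 0 = 1 := by
    show a ^ ((0 : ZMod (2 * n)).val) = 1
    rw [ZMod.val_zero, pow_zero]
  have hψneg : ∀ i : ZMod (2 * n), ψ (-i) = (ψ i)⁻¹ := by
    intro i
    have h1 : ψ (-i) * ψ i = 1 := by rw [← hψ_add, neg_add_cancel, hψ0]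
    exact eq_inv_of_mul_eq_one_left h1
  have hψA : ∀ i : ZMod (2 * n), ψ i ∈ A := fun i => pow_mem haA _
  have hψb : ∀ i : ZMod (2 * n), b * ψ i * b⁻¹ = (ψ i)⁻¹ := by
    intro i
    show b * a ^ i.val * b⁻¹ = (a ^ i.val)⁻¹
    have h1 : b * a ^ i.val * b⁻¹ = (b * a * b⁻¹) ^ i.val := by
      have h2 : (MulAut.conj b) (a ^ i.val) = ((MulAut.conj b) a) ^ i.val := map_pow _ _ _
      simpa only [MulAut.conj_apply] using h2
    rw [h1, hbconj, inv_pow]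
  have hswap : ∀ i : ZMod (2 * n), ψ i * b = b * ψ (-i) := by
    intro i
    have h1 := hψb (-i)
    rw [hψneg, inv_inv] at h1
    rw [← h1, hψneg]
    group
  have hψn : ψ (n : ZMod (2 * n)) = b ^ 2 := by
    show a ^ ((n : ZMod (2 * n)).val) = b ^ 2
    rw [ZMod.val_natCast_of_lt (by omega : n < 2 * n), hbsq]
  -- the homomorphism
  have hφm : ∀ x y : QuaternionGroup n,
      (match x * y with
        | QuaternionGroup.a i => ψ i
        | QuaternionGroup.xa i => b * ψ i)
      = (match x with
        | QuaternionGroup.a i => ψ i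
        | QuaternionGroup.xa i => b * ψ i) *
        (match y with
        | QuaternionGroup.a i => ψ i
        | QuaternionGroup.xa i => b * ψ i) := by
    rintro (i | i) (j | j)
    · show ψ (i + j) = ψ i * ψ j
      exact hψ_add i j
    · show b * ψ (j - i) = ψ i * (b * ψ j)
      rw [show j - i = -i + j by ring, hψ_add, ← mul_assoc, ← hswap, mul_assoc]
    · show b * ψ (i + j) = (b * ψ i) * ψ j
      rw [hψ_add, mul_assoc]
    · show ψ ((n : ZMod (2 * n)) + j - i) = (b * ψ i) * (b * ψ j)
      symm
      calc (b * ψ i) * (b * ψ j) = b * (ψ i * b) * ψ j := by group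
        _ = b * (b * ψ (-i)) * ψ j := by rw [hswap]
        _ = b ^ 2 * (ψ (-i) * ψ j) := by rw [pow_two]; group
        _ = ψ (n : ZMod (2 * n)) * ψ (-i + j) := by rw [hψn, hψ_add]
        _ = ψ ((n : ZMod (2 * n)) + (-i + j)) := (hψ_add _ _).symm
        _ = ψ ((n : ZMod (2 * n)) + j - i) := by congr 1; ring
  set Φ : QuaternionGroup n →* G := MonoidHom.mk' (fun x =>
      match x with
      | QuaternionGroup.a i => ψ i
      | QuaternionGroup.xa i => b * ψ i) hφm with hΦdef
  have hΦa : ∀ i : ZMod (2 * n), Φ (QuaternionGroup.a i) = ψ i := fun i => rfl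
  have hΦxa : ∀ i : ZMod (2 * n), Φ (QuaternionGroup.xa i) = b * ψ i := fun i => rfl
  -- injectivity
  have hψinj : Function.Injective ψ := by
    intro i j hij
    have h1 := pow_eq_pow_iff_modEq.1 (hij : a ^ i.val = a ^ j.val)
    rw [horda] at h1
    have h2 : i.val = j.val := by
      rw [Nat.ModEq, Nat.mod_eq_of_lt (ZMod.val_lt i), Nat.mod_eq_of_lt (ZMod.val_lt j)] at h1
      exact h1
    exact ZMod.val_injective _ h2
  have hbpsi : ∀ i j : ZMod (2 * n), ψ i ≠ b * ψ j := by
    intro i j h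
    apply hbA
    have h1 : b = ψ i * (ψ j)⁻¹ := by rw [h]; group
    rw [h1, ← hψneg, ← hψ_add]
    exact hψA _
  have hΦinj : Function.Injective Φ := by
    rintro (i | i) (j | j) hij
    · rw [hΦa, hΦa] at hij
      exact congrArg QuaternionGroup.a (hψinj hij)
    · rw [hΦa, hΦxa] at hij
      exact absurd hij (hbpsi i j)
    · rw [hΦxa, hΦa] at hij
      exact absurd hij.symm (hbpsi j i)
    · rw [hΦxa, hΦxa] at hij
      exact congrArg QuaternionGroup.xa (hψinj (mul_left_cancel hij))
  -- surjectivity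
  have hAcov : ∀ s : ℤ, ∃ i : ZMod (2 * n), ψ i = a ^ s := by
    intro s
    refine ⟨(s : ZMod (2 * n)), ?_⟩
    show a ^ ((s : ZMod (2 * n)).val) = a ^ s
    have h1 : (((s : ZMod (2 * n)).val : ℤ)) = s % ((2 * n : ℕ) : ℤ) := ZMod.val_intCast s
    have h3 : ((2 * n : ℕ) : ℤ) = (orderOf a : ℤ) := by rw [horda]
    rw [← zpow_natCast a ((s : ZMod (2 * n)).val), h1, h3, zpow_mod_orderOf]
  have hΦsurj : Function.Surjective Φ := by
    intro g
    by_cases hgA : g ∈ A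
    · obtain ⟨s, hs⟩ := mem_zpowers_iff.1 hgA
      obtain ⟨i, hi⟩ := hAcov s
      exact ⟨QuaternionGroup.a i, by rw [hΦa, hi, hs]⟩
    · have hgN : g ∈ N := hNtop ▸ Subgroup.mem_top g
      obtain ⟨s, hs⟩ := mem_zpowers_iff.1 (hcosets g hgN hgA)
      have h3 : g = a ^ s * b := by rw [hs]; group
      have h4 : b⁻¹ * a ^ s * b = a ^ (-s) := by
        have h5 : (MulAut.conj b⁻¹) (a ^ s) = ((MulAut.conj b⁻¹) a) ^ s := map_zpow _ _ _
        simp only [MulAut.conj_apply, inv_inv] at h5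
        rw [h5, hinvb, inv_zpow, ← zpow_neg]
      have h2 : g = b * a ^ (-s) := by
        calc g = a ^ s * b := h3
          _ = b * (b⁻¹ * a ^ s * b) := by group
          _ = b * a ^ (-s) := by rw [h4]
      obtain ⟨i, hi⟩ := hAcov (-s)
      exact ⟨QuaternionGroup.xa i, by rw [hΦxa, hi, ← h2]⟩
  have hbij : Function.Bijective Φ := ⟨hΦinj, hΦsurj⟩
  have hml : m + 1 = lam := by
    have h1 : Nat.card (QuaternionGroup n) = 2 ^ lam := by
      rw [Nat.card_eq_of_bijective Φ hbij, hcard]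
    rw [Nat.card_eq_fintype_card, QuaternionGroup.card] at h1
    have h2 : 4 * n = 2 ^ (m + 1) := by
      rw [hn, show (4:ℕ) = 2 ^ 2 by norm_num, ← pow_add]
      congr 1
      omega
    rw [h2] at h1
    exact Nat.pow_right_injective (by norm_num) h1
  have hneq : n = 2 ^ (lam - 2) := by
    rw [hn]
    congr 1
    omega
  exact ⟨hneq ▸ (MulEquiv.ofBijective Φ hbij).symm⟩
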